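/- Let λ > 0 and p > 0. Then the complex-valued integrals over the real line satisfy ∫_{−∞}^{∞} e^{−λu²}/(u + i·p) du = −π·i·e^{λp²}·erfc(√λ·p) and ∫_{−∞}^{∞} e^{−λu²}/(u − i·p) du = π·i·e^{λp²}·erfc(√λ·p). -/

import Mathlib

open Real MeasureTheory

/-- The complementary error function erfc(y) := (2/√π)·∫_y^∞ e^{−t²} dt. -/
noncomputable def erfc (y : ℝ) : ℝ :=
  2 / Real.sqrt Real.pi * ∫ t in Set.Ioi y, Real.exp (-t ^ 2)

section
open Set Filter intervalIntegral

noncomputable def E (y : ℝ) : ℝ := ∫ t in Ioi y, rexp (-t^2)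

theorem exp_decay_Ioi (c a : ℝ) (hc : 0 < c) : ∫ s in Ioi a, rexp (-(c*s)) = rexp (-(c*a))/c := by
  have := integral_Ioi_of_hasDerivAt_of_tendsto' (f := fun s => -rexp (-(c*s))/c)
    (f' := fun s => rexp (-(c*s))) (a := a) (m := 0) ?_ ?_ ?_
  · rw [this]; ring
  · intro x _
    have h1 : HasDerivAt (fun s => -(c*s)) (-c) x := by
      simpa using ((hasDerivAt_id x).const_mul c).fun_neg
    have := (h1.exp).neg.div_const c
    refine this.congr_deriv ?_
    field_simp
  · exact (exp_neg_integrableOn_Ioi a hc).congr_fun (fun x _ => by ring_nf) measurableSet_Ioi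
  · have h2 : Tendsto (fun s : ℝ => -(c*s)) atTop atBot := by
      apply tendsto_neg_atBot_iff.mpr
      exact (tendsto_const_mul_atTop_of_pos hc).mpr tendsto_id
    have := ((Real.tendsto_exp_atBot.comp h2).neg).div_const c
    simpa using this

theorem gauss_int : Integrable (fun t : ℝ => rexp (-t^2)) := by
  simpa using integrable_exp_neg_mul_sq (one_pos)

theorem E_eq (y : ℝ) : E y = (∫ t : ℝ, rexp (-t^2)) - (∫ t in Iic 0, rexp (-t^2)) - ∫ t in (0:ℝ)..y, rexp (-t^2) := by
  have h := integral_Iic_add_Ioi (gauss_int.integrableOn (s := Iic y)) (gauss_int.integrableOn (s := Ioi y)) (μ := volume)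
  have h2 := integral_Iic_sub_Iic (gauss_int.integrableOn (s := Iic 0)) (gauss_int.integrableOn (s := Iic y)) (μ := volume)
  unfold E
  rw [← h, ← h2]; ring

theorem E_deriv (y : ℝ) : HasDerivAt E (-rexp (-y^2)) y := by
  have hc : Continuous fun t : ℝ => rexp (-t^2) := by continuity
  have h : HasDerivAt (fun y => ∫ t in (0:ℝ)..y, rexp (-t^2)) (rexp (-y^2)) y :=
    integral_hasDerivAt_right (hc.intervalIntegrable _ _)
      hc.stronglyMeasurable.stronglyMeasurableAtFilter hc.continuousAt
  have := (h.const_sub ((∫ t : ℝ, rexp (-t^2)) - (∫ t in Iic 0, rexp (-t^2))))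
  refine HasDerivAt.congr_of_eventuallyEq this ?_
  filter_upwards with x
  rw [E_eq x]

theorem E_tendsto : Tendsto E atTop (nhds 0) := by
  have hub : ∀ᶠ y in atTop, E y ≤ rexp (-y) := by
    filter_upwards [eventually_ge_atTop (1:ℝ)] with y hy
    have : E y ≤ ∫ t in Ioi y, rexp (-t) := by
      apply setIntegral_mono_on gauss_int.integrableOn
        ((exp_neg_integrableOn_Ioi y one_pos).congr_fun (fun x _ => by ring_nf) measurableSet_Ioi)
        measurableSet_Ioi
      intro t ht
      apply exp_le_exp.mpr
      simp only [neg_le_neg_iff]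
      nlinarith [le_trans hy (le_of_lt ht)]
    rwa [integral_exp_neg_Ioi] at this
  have hlb : ∀ᶠ y in atTop, 0 ≤ E y := by
    filter_upwards with y
    exact setIntegral_nonneg measurableSet_Ioi (fun t _ => (exp_pos _).le)
  have hexp : Tendsto (fun y : ℝ => rexp (-y)) atTop (nhds 0) := by
    exact Real.tendsto_exp_atBot.comp (tendsto_neg_atBot_iff.mpr tendsto_id)
  exact tendsto_of_tendsto_of_tendsto_of_le_of_le' tendsto_const_nhds hexp hlb hub

theorem L4 (lam p : ℝ) (hlam : 0 < lam) (hp : 0 < p) :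
    ∫ s in Ioi lam, Real.sqrt π * rexp (-(p^2*s)) / Real.sqrt s
      = (2*Real.sqrt π/p) * E (p*Real.sqrt lam) := by
  have key := integral_Ioi_of_hasDerivAt_of_tendsto'
    (f := fun s => -(2*Real.sqrt π/p) * E (p*Real.sqrt s))
    (f' := fun s => Real.sqrt π * rexp (-(p^2*s)) / Real.sqrt s) (a := lam) (m := 0) ?_ ?_ ?_
  · rw [key]; ring
  · intro x hx
    have hx0 : 0 < x := lt_of_lt_of_le hlam hx
    have hsq : HasDerivAt Real.sqrt (1/(2*Real.sqrt x)) x := Real.hasDerivAt_sqrt hx0.ne'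
    have hy : HasDerivAt (fun s => p * Real.sqrt s) (p * (1/(2*Real.sqrt x))) x := hsq.const_mul p
    have hE := (E_deriv (p * Real.sqrt x)).comp x hy
    have := hE.const_mul (-(2*Real.sqrt π/p))
    refine this.congr_deriv ?_
    have h1 : (p * Real.sqrt x)^2 = p^2 * x := by
      rw [mul_pow, Real.sq_sqrt hx0.le]
    rw [h1]
    have hsx : Real.sqrt x ≠ 0 := (Real.sqrt_pos.mpr hx0).ne'
    field_simp
  · have hcont : ContinuousOn (fun s => Real.sqrt π * rexp (-(p^2*s)) / Real.sqrt s) (Ioi lam) := by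
      apply ContinuousOn.div (Continuous.continuousOn (by continuity)) (Real.continuous_sqrt.continuousOn)
      intro x hx
      exact (Real.sqrt_pos.mpr (lt_of_lt_of_le hlam (le_of_lt hx))).ne'
    refine Integrable.mono' ((exp_neg_integrableOn_Ioi lam (by positivity : (0:ℝ) < p^2)).const_mul
        (Real.sqrt π / Real.sqrt lam)) (hcont.aestronglyMeasurable measurableSet_Ioi) ?_
    filter_upwards [ae_restrict_mem measurableSet_Ioi] with s hs
    have hs0 : 0 < s := lt_trans hlam hs
    rw [Real.norm_eq_abs, abs_of_nonneg (by positivity)]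
    rw [div_le_iff₀ (Real.sqrt_pos.mpr hs0)]
    have h1 : Real.sqrt lam ≤ Real.sqrt s := Real.sqrt_le_sqrt (le_of_lt hs)
    have h2 : 0 < Real.sqrt lam := Real.sqrt_pos.mpr hlam
    calc Real.sqrt π * rexp (-(p^2*s)) = (Real.sqrt π / Real.sqrt lam * rexp (-(p ^ 2 * s))) * Real.sqrt lam := by
          field_simp
      _ ≤ (Real.sqrt π / Real.sqrt lam * rexp (-(p ^ 2 * s))) * Real.sqrt s := by
          apply mul_le_mul_of_nonneg_left h1 (by positivity)
      _ = Real.sqrt π / Real.sqrt lam * rexp (-p ^ 2 * s) * Real.sqrt s := by ring_nf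
  · have h1 : Tendsto (fun s : ℝ => p * Real.sqrt s) atTop atTop :=
      (tendsto_const_mul_atTop_of_pos hp).mpr <| tendsto_atTop_atTop_of_monotone
        (fun a b hab => Real.sqrt_le_sqrt hab)
        (fun b => ⟨b^2, by rw [Real.sqrt_sq_eq_abs]; exact le_abs_self b⟩)
    have := (E_tendsto.comp h1).const_mul (-(2*Real.sqrt π/p))
    simpa using this

theorem L5 (lam p : ℝ) (hlam : 0 < lam) (hp : 0 < p) :
    ∫ u : ℝ, rexp (-(lam*(u^2+p^2)))/(u^2+p^2)
      = ∫ s in Ioi lam, Real.sqrt π * rexp (-(p^2*s)) / Real.sqrt s := by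
  have hint : Integrable (Function.uncurry fun (u s : ℝ) => rexp (-(s*(u^2+p^2))))
      (volume.prod (volume.restrict (Ioi lam))) := by
    have hG : Integrable (fun z : ℝ × ℝ => rexp (-(lam*z.1^2)) * rexp (-(p^2*z.2)))
        (volume.prod (volume.restrict (Ioi lam))) := by
      have h1 : Integrable (fun u : ℝ => rexp (-(lam*u^2))) volume := by
        simpa [neg_mul] using integrable_exp_neg_mul_sq hlam
      have h2 : Integrable (fun s : ℝ => rexp (-(p^2*s))) (volume.restrict (Ioi lam)) :=
        (exp_neg_integrableOn_Ioi lam (by positivity : (0:ℝ) < p^2)).congr_fun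
          (fun x _ => by ring_nf) measurableSet_Ioi
      exact Integrable.mul_prod (μ := volume) (ν := volume.restrict (Ioi lam)) h1 h2
    refine hG.mono' (Continuous.aestronglyMeasurable ?_) ?_
    · rw [Function.uncurry_def]; continuity
    have hres : volume.prod (volume.restrict (Ioi lam))
        = (volume.prod volume).restrict ((univ : Set ℝ) ×ˢ Ioi lam) := by
      rw [← Measure.prod_restrict, Measure.restrict_univ]
    rw [hres]
    filter_upwards [ae_restrict_mem (MeasurableSet.univ.prod measurableSet_Ioi)] with z hz
    obtain ⟨-, hz2⟩ := hz
    rw [Real.norm_eq_abs, Function.uncurry_def, abs_of_nonneg (exp_pos _).le, ← Real.exp_add]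
    apply exp_le_exp.mpr
    have h1 : lam ≤ z.2 := le_of_lt hz2
    nlinarith [sq_nonneg z.1, sq_nonneg p]
  have swap := integral_integral_swap hint
  have lhs_eq : ∀ u : ℝ, (∫ s in Ioi lam, rexp (-(s*(u^2+p^2))))
      = rexp (-(lam*(u^2+p^2)))/(u^2+p^2) := by
    intro u
    have hc : (0:ℝ) < u^2+p^2 := by positivity
    calc (∫ s in Ioi lam, rexp (-(s*(u^2+p^2))))
        = ∫ s in Ioi lam, rexp (-((u^2+p^2)*s)) :=
          setIntegral_congr_fun measurableSet_Ioi (fun s _ => by ring_nf)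
      _ = rexp (-((u^2+p^2)*lam))/(u^2+p^2) := exp_decay_Ioi _ _ hc
      _ = rexp (-(lam*(u^2+p^2)))/(u^2+p^2) := by ring_nf
  have rhs_eq : ∀ s ∈ Ioi lam, (∫ u : ℝ, rexp (-(s*(u^2+p^2))))
      = Real.sqrt π * rexp (-(p^2*s)) / Real.sqrt s := by
    intro s hs
    have hs0 : 0 < s := lt_trans hlam hs
    have : ∀ u : ℝ, rexp (-(s*(u^2+p^2))) = rexp (-(p^2*s)) * rexp (-s*u^2) := by
      intro u; rw [← Real.exp_add]; ring_nf
    simp_rw [this]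
    rw [MeasureTheory.integral_const_mul, integral_gaussian,
      Real.sqrt_div (le_of_lt Real.pi_pos) s]
    ring
  calc ∫ u : ℝ, rexp (-(lam*(u^2+p^2)))/(u^2+p^2)
      = ∫ u : ℝ, ∫ s in Ioi lam, rexp (-(s*(u^2+p^2))) := by
        congr 1; ext u; rw [lhs_eq u]
    _ = ∫ s in Ioi lam, ∫ u : ℝ, rexp (-(s*(u^2+p^2))) := swap
    _ = ∫ s in Ioi lam, Real.sqrt π * rexp (-(p^2*s)) / Real.sqrt s :=
        setIntegral_congr_fun measurableSet_Ioi rhs_eq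


theorem Jval (lam p : ℝ) (hlam : 0 < lam) (hp : 0 < p) :
    ∫ u : ℝ, rexp (-(lam*u^2))/(u^2+p^2)
      = (π/p) * rexp (lam*p^2) * erfc (Real.sqrt lam * p) := by
  have h1 : ∫ u : ℝ, rexp (-(lam*(u^2+p^2)))/(u^2+p^2)
      = (2*Real.sqrt π/p) * E (p*Real.sqrt lam) := by rw [L5 lam p hlam hp, L4 lam p hlam hp]
  have h2 : ∀ u : ℝ, rexp (-(lam*(u^2+p^2)))/(u^2+p^2)
      = rexp (-(lam*p^2)) * (rexp (-(lam*u^2))/(u^2+p^2)) := by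
    intro u
    rw [← mul_div_assoc, ← Real.exp_add]; ring_nf
  simp_rw [h2] at h1
  rw [MeasureTheory.integral_const_mul] at h1
  have h3 : erfc (Real.sqrt lam * p) = 2 / Real.sqrt π * E (p * Real.sqrt lam) := by
    rw [erfc, mul_comm p]; rfl
  have hsp : Real.sqrt π ≠ 0 := (Real.sqrt_pos.mpr Real.pi_pos).ne'
  have hpi : Real.sqrt π * Real.sqrt π = π := Real.mul_self_sqrt Real.pi_pos.le
  have he : rexp (-(lam*p^2)) ≠ 0 := (exp_pos _).ne'
  rw [h3]
  have hX : (∫ u : ℝ, rexp (-(lam*u^2))/(u^2+p^2))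
      = rexp (lam*p^2) * (2*Real.sqrt π/p * E (p*Real.sqrt lam)) := by
    have := congrArg (fun x => rexp (lam*p^2) * x) h1
    simpa [← mul_assoc, ← Real.exp_add] using this
  rw [hX]
  field_simp
  linear_combination E (p*Real.sqrt lam) * hpi

end

/-- For λ > 0 and p > 0,
    ∫_{−∞}^{∞} e^{−λu²}/(u + i·p) du = −π·i·e^{λp²}·erfc(√λ·p) and
    ∫_{−∞}^{∞} e^{−λu²}/(u − i·p) du = π·i·e^{λp²}·erfc(√λ·p). -/
theorem stmt_3 (lam p : ℝ) (hlam : 0 < lam) (hp : 0 < p) :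
    (∫ u : ℝ, Complex.exp (-(lam : ℂ) * (u : ℂ) ^ 2) / ((u : ℂ) + Complex.I * (p : ℂ)))
        = -(Real.pi : ℂ) * Complex.I * Complex.exp ((lam : ℂ) * (p : ℂ) ^ 2) *
            (erfc (Real.sqrt lam * p) : ℂ) ∧
    (∫ u : ℝ, Complex.exp (-(lam : ℂ) * (u : ℂ) ^ 2) / ((u : ℂ) - Complex.I * (p : ℂ)))
        = (Real.pi : ℂ) * Complex.I * Complex.exp ((lam : ℂ) * (p : ℂ) ^ 2) *
            (erfc (Real.sqrt lam * p) : ℂ) := by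
  set f : ℝ → ℝ := fun u => rexp (-(lam*u^2)) * u/(u^2+p^2) with hf_def
  set g : ℝ → ℝ := fun u => rexp (-(lam*u^2))/(u^2+p^2) with hg_def
  have hgauss : Integrable (fun u : ℝ => rexp (-(lam*u^2))) := by
    simpa [neg_mul] using integrable_exp_neg_mul_sq hlam
  have hg : Integrable g := by
    refine (hgauss.const_mul (1/p^2)).mono' (Continuous.aestronglyMeasurable ?_) ?_
    · apply Continuous.div (by continuity) (by continuity)
      intro x; positivity
    · filter_upwards with u
      rw [Real.norm_eq_abs, abs_of_nonneg (by positivity)]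
      have h := Real.exp_pos (-(lam*u^2))
      calc rexp (-(lam*u^2))/(u^2+p^2) ≤ rexp (-(lam*u^2))/p^2 := by
            apply div_le_div_of_nonneg_left h.le (by positivity) (by nlinarith [sq_nonneg u])
        _ = 1/p^2 * rexp (-(lam*u^2)) := by ring
  have hf : Integrable f := by
    refine (hgauss.const_mul (1/(2*p))).mono' (Continuous.aestronglyMeasurable ?_) ?_
    · apply Continuous.div (by continuity) (by continuity)
      intro x; positivity
    · filter_upwards with u
      have hd : (0:ℝ) < u^2+p^2 := by positivity
      rw [Real.norm_eq_abs, abs_div, abs_of_pos hd, abs_mul,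
        abs_of_nonneg (Real.exp_pos _).le]
      have h := Real.exp_pos (-(lam*u^2))
      have h2 : 2*p*|u| ≤ u^2+p^2 := by nlinarith [sq_nonneg (|u|-p), sq_abs u]
      have h3 := mul_le_mul_of_nonneg_left h2 h.le
      rw [div_le_iff₀ hd, show (1/(2*p)) * rexp (-(lam*u^2)) * (u^2+p^2)
          = rexp (-(lam*u^2)) * (u^2+p^2) / (2*p) by ring, le_div_iff₀ (by positivity)]
      nlinarith [h3]
  have hf0 : (∫ u : ℝ, f u) = 0 := by
    have hodd : ∀ u : ℝ, f (-u) = - f u := by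
      intro u; simp only [hf_def]; ring_nf
    have h1 : (∫ u : ℝ, f (-u)) = ∫ u : ℝ, f u := integral_neg_eq_self f volume
    simp_rw [hodd] at h1
    rw [MeasureTheory.integral_neg] at h1
    linarith
  have hJ := Jval lam p hlam hp
  have hcexp : Complex.exp ((lam : ℂ) * (p : ℂ) ^ 2) = ((rexp (lam * p^2) : ℝ) : ℂ) := by
    push_cast [Complex.ofReal_exp]
    ring_nf
  have hden : ∀ u : ℝ, ((u:ℂ)^2 + (p:ℂ)^2) ≠ 0 := by
    intro u
    have : ((u:ℂ)^2 + (p:ℂ)^2) = ((u^2+p^2 : ℝ) : ℂ) := by push_cast; ring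
    rw [this]
    exact_mod_cast (by positivity : (u^2+p^2 : ℝ) ≠ 0)
  have hdenp : ∀ u : ℝ, ((u:ℂ) + Complex.I * (p:ℂ)) ≠ 0 := by
    intro u
    intro h
    have := congrArg Complex.im h
    simp at this
    exact hp.ne' this
  have hdenm : ∀ u : ℝ, ((u:ℂ) - Complex.I * (p:ℂ)) ≠ 0 := by
    intro u
    intro h
    have := congrArg Complex.im h
    simp at this
    exact hp.ne this.symm
  have key1 : ∀ u : ℝ, Complex.exp (-(lam : ℂ) * (u : ℂ) ^ 2) / ((u : ℂ) + Complex.I * (p : ℂ))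
      = ((f u : ℝ) : ℂ) - Complex.I * (p:ℂ) * ((g u : ℝ) : ℂ) := by
    intro u
    have he : Complex.exp (-(lam : ℂ) * (u : ℂ) ^ 2) = ((rexp (-(lam * u^2)) : ℝ) : ℂ) := by
      push_cast [Complex.ofReal_exp]; ring_nf
    rw [he, hf_def, hg_def, div_eq_iff (hdenp u)]
    simp only
    push_cast
    field_simp [hden u]
    ring_nf
    rw [Complex.I_sq]
    ring
  have key2 : ∀ u : ℝ, Complex.exp (-(lam : ℂ) * (u : ℂ) ^ 2) / ((u : ℂ) - Complex.I * (p : ℂ))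
      = ((f u : ℝ) : ℂ) + Complex.I * (p:ℂ) * ((g u : ℝ) : ℂ) := by
    intro u
    have he : Complex.exp (-(lam : ℂ) * (u : ℂ) ^ 2) = ((rexp (-(lam * u^2)) : ℝ) : ℂ) := by
      push_cast [Complex.ofReal_exp]; ring_nf
    rw [he, hf_def, hg_def, div_eq_iff (hdenm u)]
    simp only
    push_cast
    field_simp [hden u]
    ring_nf
    rw [Complex.I_sq]
    ring
  have hoff : (∫ u : ℝ, ((f u : ℝ):ℂ)) = (((∫ u : ℝ, f u) : ℝ) : ℂ) := integral_ofReal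
  have hofg : (∫ u : ℝ, ((g u : ℝ):ℂ)) = (((∫ u : ℝ, g u) : ℝ) : ℂ) := integral_ofReal
  have hIf : Integrable (fun u : ℝ => ((f u : ℝ) : ℂ)) := hf.ofReal
  have hIg : Integrable (fun u : ℝ => ((g u : ℝ) : ℂ)) := hg.ofReal
  have int1 : (∫ u : ℝ, ((f u : ℝ) : ℂ) - Complex.I * (p:ℂ) * ((g u : ℝ) : ℂ))
      = - (Complex.I * (p:ℂ)) * (((∫ u : ℝ, g u) : ℝ) : ℂ) := by
    rw [integral_sub hIf (hIg.const_mul _), MeasureTheory.integral_const_mul, hoff, hofg, hf0]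
    push_cast
    ring
  have int2 : (∫ u : ℝ, ((f u : ℝ) : ℂ) + Complex.I * (p:ℂ) * ((g u : ℝ) : ℂ))
      = (Complex.I * (p:ℂ)) * (((∫ u : ℝ, g u) : ℝ) : ℂ) := by
    rw [integral_add hIf (hIg.const_mul _), MeasureTheory.integral_const_mul, hoff, hofg, hf0]
    push_cast
    ring
  have hpc : (p:ℂ) ≠ 0 := by exact_mod_cast hp.ne'
  constructor
  · calc (∫ u : ℝ, Complex.exp (-(lam : ℂ) * (u : ℂ) ^ 2) / ((u : ℂ) + Complex.I * (p : ℂ)))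
        = ∫ u : ℝ, (((f u : ℝ) : ℂ) - Complex.I * (p:ℂ) * ((g u : ℝ) : ℂ)) := by
          congr 1; ext u; exact key1 u
      _ = - (Complex.I * (p:ℂ)) * (((∫ u : ℝ, g u) : ℝ) : ℂ) := int1
      _ = -(Real.pi : ℂ) * Complex.I * Complex.exp ((lam : ℂ) * (p : ℂ) ^ 2) *
            (erfc (Real.sqrt lam * p) : ℂ) := by
          rw [hJ, hcexp]
          push_cast
          field_simp [hpc]
  · calc (∫ u : ℝ, Complex.exp (-(lam : ℂ) * (u : ℂ) ^ 2) / ((u : ℂ) - Complex.I * (p : ℂ)))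
        = ∫ u : ℝ, (((f u : ℝ) : ℂ) + Complex.I * (p:ℂ) * ((g u : ℝ) : ℂ)) := by
          congr 1; ext u; exact key2 u
      _ = (Complex.I * (p:ℂ)) * (((∫ u : ℝ, g u) : ℝ) : ℂ) := int2
      _ = (Real.pi : ℂ) * Complex.I * Complex.exp ((lam : ℂ) * (p : ℂ) ^ 2) *
            (erfc (Real.sqrt lam * p) : ℂ) := by
          rw [hJ, hcexp]
          push_cast
          field_simp [hpc]
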